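/- Let A and B be finite types and let n be a finite type with |n| = |A|·|B|. Let U_enc be a unitary matrix of shape n × (A × B), and for matrices ρ, σ of shape n × n define d(ρ, σ) = (1/2)·‖ptr_A(U_enc† ρ U_enc) − ptr_A(U_enc† σ U_enc)‖₁, where ptr_A is the partial trace over A and ‖·‖₁ is the trace norm. Suppose u is a unitary matrix on n with U_enc† u U_enc = v ⊗ I_B (Kronecker product) for some unitary matrix v on A. Then for all Hermitian matrices ρ, σ: d(ρ, σ) ≤ (1/2)·‖ρ − u σ u†‖₁. -/

import Mathlib

open scoped Kronecker Matrix ComplexOrder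

/-- The trace norm of a complex matrix: the trace of the positive semidefinite
square root of `Mᴴ M`. -/
noncomputable def traceNorm {m : Type} [Fintype m] [DecidableEq m]
    (M : Matrix m m ℂ) : ℝ :=
  ((Matrix.posSemidef_conjTranspose_mul_self M).1.eigenvectorUnitary.1 *
    Matrix.diagonal (((↑) : ℝ → ℂ) ∘ (√·) ∘ (Matrix.posSemidef_conjTranspose_mul_self M).1.eigenvalues) *
    (star (Matrix.posSemidef_conjTranspose_mul_self M).1.eigenvectorUnitary : Matrix m m ℂ)).trace.re

/-- The partial trace over `A` of a matrix indexed by `A × B`. -/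
noncomputable def ptrA {A B : Type} [Fintype A] (M : Matrix (A × B) (A × B) ℂ) :
    Matrix B B ℂ :=
  Matrix.of fun b b' => ∑ a, M (a, b) (a, b')

section Aux

open Matrix

variable {m n : Type} [Fintype m] [DecidableEq m] [Fintype n] [DecidableEq n]

open scoped MatrixOrder

lemma traceNorm_eq_sqrt (M : Matrix m m ℂ) :
    traceNorm M = (CFC.sqrt (Mᴴ * M)).trace.re := by
  rw [CFC.sqrt_eq_real_sqrt _ (posSemidef_conjTranspose_mul_self M).nonneg,
    cfcₙ_eq_cfc (hf0 := Real.sqrt_zero), (posSemidef_conjTranspose_mul_self M).1.cfc_eq,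
    IsHermitian.cfc, Unitary.conjStarAlgAut_apply, traceNorm]
  rfl

lemma aux_ofReal (x : ℝ) : (RCLike.ofReal x : ℂ) = (x : ℂ) := rfl

lemma aux_trace_conj {E : Matrix m m ℂ} (hE1 : Eᴴ * E = 1) (D : Matrix m m ℂ) :
    (E * D * Eᴴ).trace = D.trace := by
  rw [Matrix.trace_mul_comm (E * D) Eᴴ, ← Matrix.mul_assoc, hE1, one_mul]

lemma aux_conj_mul_conj {E : Matrix m m ℂ} (hE1 : Eᴴ * E = 1) (D₁ D₂ : Matrix m m ℂ) :
    (E * D₁ * Eᴴ) * (E * D₂ * Eᴴ) = E * (D₁ * D₂) * Eᴴ := by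
  have : Eᴴ * (E * (D₂ * Eᴴ)) = D₂ * Eᴴ := by
    rw [← Matrix.mul_assoc, hE1, one_mul]
  simp only [Matrix.mul_assoc, this]

lemma aux_trace_conj' (E D V : Matrix m m ℂ) :
    (E * D * Eᴴ * V).trace = (D * (Eᴴ * V * E)).trace := by
  have h1 : E * D * Eᴴ * V = E * D * (Eᴴ * V) := by simp only [Matrix.mul_assoc]
  rw [h1, Matrix.trace_mul_cycle, Matrix.trace_mul_comm]

lemma aux_eigU_mul_self {H : Matrix m m ℂ} (hH : H.IsHermitian) :
    (hH.eigenvectorUnitary : Matrix m m ℂ)ᴴ * (hH.eigenvectorUnitary : Matrix m m ℂ) = 1 := by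
  simpa [Matrix.star_eq_conjTranspose] using
    (Matrix.mem_unitaryGroup_iff').mp hH.eigenvectorUnitary.2

lemma aux_self_mul_eigU {H : Matrix m m ℂ} (hH : H.IsHermitian) :
    (hH.eigenvectorUnitary : Matrix m m ℂ) * (hH.eigenvectorUnitary : Matrix m m ℂ)ᴴ = 1 := by
  simpa [Matrix.star_eq_conjTranspose] using
    (Matrix.mem_unitaryGroup_iff).mp hH.eigenvectorUnitary.2

/-- The trace norm of a Hermitian matrix is the sum of the absolute values of its
eigenvalues. -/
lemma traceNorm_eq_sum_abs {H : Matrix m m ℂ} (hH : H.IsHermitian) :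
    traceNorm H = ∑ i, |hH.eigenvalues i| := by
  set E : Matrix m m ℂ := (hH.eigenvectorUnitary : Matrix m m ℂ) with hE
  have hE1 : Eᴴ * E = 1 := aux_eigU_mul_self hH
  set S : Matrix m m ℂ := E * Matrix.diagonal (fun i => ((|hH.eigenvalues i| : ℝ) : ℂ)) * Eᴴ with hS
  have hSpsd : S.PosSemidef := by
    apply Matrix.PosSemidef.mul_mul_conjTranspose_same
    refine Matrix.posSemidef_diagonal_iff.mpr fun i => ?_
    exact_mod_cast Complex.zero_le_real.mpr (abs_nonneg _)
  have hsq : S ^ 2 = Hᴴ * H := by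
    have hspec : H = E * Matrix.diagonal (RCLike.ofReal ∘ hH.eigenvalues) * Eᴴ := by
      simpa [Matrix.star_eq_conjTranspose] using hH.spectral_theorem
    rw [hH.eq, pow_two, hS, aux_conj_mul_conj hE1]
    conv_rhs => rw [hspec]
    rw [aux_conj_mul_conj hE1]
    rw [Matrix.diagonal_mul_diagonal, Matrix.diagonal_mul_diagonal]
    have hfun : (fun i => ((|hH.eigenvalues i| : ℝ) : ℂ) * ((|hH.eigenvalues i| : ℝ) : ℂ))
        = fun i => ((RCLike.ofReal ∘ hH.eigenvalues) i * (RCLike.ofReal ∘ hH.eigenvalues) i) := by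
      funext i
      simp only [Function.comp_apply, aux_ofReal]
      rw [← Complex.ofReal_mul, ← Complex.ofReal_mul, abs_mul_abs_self]
    rw [hfun]
  have hsqrt : S = CFC.sqrt (Hᴴ * H) :=
    (CFC.sqrt_unique (by rw [← pow_two]; exact hsq) hSpsd.nonneg).symm
  rw [traceNorm_eq_sqrt, ← hsqrt, hS, aux_trace_conj hE1, Matrix.trace_diagonal]
  rw [← Complex.ofReal_sum]
  exact Complex.ofReal_re _

/-- Entries of a matrix with orthonormal columns have absolute value at most 1. -/
lemma aux_entry_le_one {W : Matrix m m ℂ} (hW : Wᴴ * W = 1) (i : m) :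
    ‖W i i‖ ≤ 1 := by
  have h1 : (Wᴴ * W) i i = 1 := by rw [hW]; simp [Matrix.one_apply]
  have h2 : ∑ k, Complex.normSq (W k i) = 1 := by
    have h2' : ((∑ k, Complex.normSq (W k i) : ℝ) : ℂ) = 1 := by
      rw [← h1, Matrix.mul_apply]
      push_cast
      simp [Matrix.conjTranspose_apply, Complex.star_def,
        Complex.normSq_eq_conj_mul_self]
    exact_mod_cast h2'
  have h4 : Complex.normSq (W i i) ≤ 1 := by
    rw [← h2]
    exact Finset.single_le_sum (f := fun k => Complex.normSq (W k i))
      (fun k _ => Complex.normSq_nonneg _) (Finset.mem_univ i)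
  nlinarith [Complex.sq_norm (W i i), norm_nonneg (W i i)]

/-- von Neumann-type bound: the real part of `tr(H V)` for unitary `V` is at most
the trace norm of the Hermitian matrix `H`. -/
lemma aux_re_trace_mul_le {H : Matrix m m ℂ} (hH : H.IsHermitian)
    {V : Matrix m m ℂ} (hV1 : Vᴴ * V = 1) (hV2 : V * Vᴴ = 1) :
    ((H * V).trace).re ≤ traceNorm H := by
  set E : Matrix m m ℂ := (hH.eigenvectorUnitary : Matrix m m ℂ) with hE
  have hE1 : Eᴴ * E = 1 := aux_eigU_mul_self hH
  have hE2 : E * Eᴴ = 1 := aux_self_mul_eigU hH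
  set W : Matrix m m ℂ := Eᴴ * V * E with hWdef
  have hW : Wᴴ * W = 1 := by
    have hc1 : E * (Eᴴ * (V * E)) = V * E := by
      rw [← Matrix.mul_assoc, hE2, Matrix.one_mul]
    have hc2 : Vᴴ * (V * E) = E := by
      rw [← Matrix.mul_assoc, hV1, Matrix.one_mul]
    rw [hWdef]
    simp only [Matrix.conjTranspose_mul, Matrix.conjTranspose_conjTranspose,
      Matrix.mul_assoc, hc1, hc2, hE1]
  have hspec : H = E * Matrix.diagonal (RCLike.ofReal ∘ hH.eigenvalues) * Eᴴ := by
    simpa [Matrix.star_eq_conjTranspose] using hH.spectral_theorem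
  have htr : (H * V).trace = (Matrix.diagonal (RCLike.ofReal ∘ hH.eigenvalues) * W).trace := by
    conv_lhs => rw [hspec]
    rw [hWdef]
    exact aux_trace_conj' E _ V
  rw [traceNorm_eq_sum_abs hH, htr]
  have htr2 : (Matrix.diagonal (RCLike.ofReal ∘ hH.eigenvalues) * W).trace
      = ∑ i, (hH.eigenvalues i : ℂ) * W i i := by
    simp only [Matrix.trace, Matrix.diag]
    refine Finset.sum_congr rfl fun i _ => ?_
    simp [Matrix.diag, Matrix.diagonal_mul, aux_ofReal]
  rw [htr2, Complex.re_sum]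
  refine Finset.sum_le_sum fun i _ => ?_
  have h1 : ((hH.eigenvalues i : ℂ) * W i i).re = hH.eigenvalues i * (W i i).re := by
    simp [Complex.mul_re]
  rw [h1]
  calc hH.eigenvalues i * (W i i).re ≤ |hH.eigenvalues i * (W i i).re| := le_abs_self _
    _ = |hH.eigenvalues i| * |(W i i).re| := abs_mul _ _
    _ ≤ |hH.eigenvalues i| * 1 := by
        refine mul_le_mul_of_nonneg_left ?_ (abs_nonneg _)
        exact le_trans (Complex.abs_re_le_norm _) (aux_entry_le_one hW i)
    _ = |hH.eigenvalues i| := mul_one _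

/-- Trace norm is invariant under conjugation by a (rectangular) unitary. -/
lemma aux_traceNorm_conj (U : Matrix m n ℂ) (hU1 : Uᴴ * U = 1) (hU2 : U * Uᴴ = 1)
    (T : Matrix m m ℂ) : traceNorm (Uᴴ * T * U) = traceNorm T := by
  set S := CFC.sqrt (Tᴴ * T) with hSdef
  have hSpsd : S.PosSemidef := (CFC.sqrt_nonneg _).posSemidef
  have hconjpsd : (Uᴴ * S * U).PosSemidef := hSpsd.conjTranspose_mul_mul_same U
  have hsq : (Uᴴ * S * U) ^ 2 = (Uᴴ * T * U)ᴴ * (Uᴴ * T * U) := by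
    have hcancel : ∀ X : Matrix m n ℂ, U * (Uᴴ * X) = X := fun X => by
      rw [← Matrix.mul_assoc, hU2, Matrix.one_mul]
    simp only [pow_two, Matrix.conjTranspose_mul, Matrix.conjTranspose_conjTranspose,
      Matrix.mul_assoc, hcancel]
    congr 1
    rw [← Matrix.mul_assoc, ← Matrix.mul_assoc, ← pow_two,
      CFC.sq_sqrt (Tᴴ * T) (posSemidef_conjTranspose_mul_self T).nonneg, Matrix.mul_assoc]
  have hsqrt : Uᴴ * S * U = CFC.sqrt ((Uᴴ * T * U)ᴴ * (Uᴴ * T * U)) :=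
    (CFC.sqrt_unique (by rw [← pow_two]; exact hsq) hconjpsd.nonneg).symm
  rw [traceNorm_eq_sqrt, ← hsqrt, Matrix.trace_mul_comm (Uᴴ * S) U, ← Matrix.mul_assoc, hU2, one_mul,
    traceNorm_eq_sqrt]

variable {A B : Type} [Fintype A] [Fintype B] [DecidableEq A] [DecidableEq B]

lemma aux_kron_conjT (v : Matrix A A ℂ) (W : Matrix B B ℂ) :
    (v ⊗ₖ W)ᴴ = vᴴ ⊗ₖ Wᴴ := by
  ext ⟨a, b⟩ ⟨a', b'⟩
  simp [Matrix.conjTranspose_apply, Matrix.kroneckerMap_apply]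

lemma aux_ptrA_sub (X Y : Matrix (A × B) (A × B) ℂ) : ptrA (X - Y) = ptrA X - ptrA Y := by
  ext b b'
  simp [ptrA, Matrix.sub_apply, Finset.sum_sub_distrib]

lemma aux_ptrA_isHermitian {M : Matrix (A × B) (A × B) ℂ} (hM : M.IsHermitian) :
    (ptrA M).IsHermitian := by
  ext b b'
  simp only [Matrix.conjTranspose_apply, ptrA, Matrix.of_apply, star_sum]
  exact Finset.sum_congr rfl fun a _ => hM.apply _ _

lemma aux_trace_mul_one_kron (M : Matrix (A × B) (A × B) ℂ) (W : Matrix B B ℂ) :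
    (M * ((1 : Matrix A A ℂ) ⊗ₖ W)).trace = (ptrA M * W).trace := by
  simp only [Matrix.trace, Matrix.diag, Matrix.mul_apply, ptrA, Matrix.of_apply,
    Matrix.kroneckerMap_apply, Matrix.one_apply, Fintype.sum_prod_type]
  simp only [ite_mul, one_mul, zero_mul, mul_ite, mul_zero, Finset.sum_ite_eq,
    Finset.mem_univ, if_true, Finset.sum_mul]
  have step : ∀ (x : A) (x1 : B), (∑ x2 : A, ∑ x3 : B,
      if x2 = x then M (x, x1) (x2, x3) * W x3 x1 else 0)
      = ∑ x3 : B, M (x, x1) (x, x3) * W x3 x1 := by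
    intro x x1
    rw [Finset.sum_comm]
    simp only [Finset.sum_ite_eq', Finset.mem_univ, if_true]
  refine Eq.trans (Finset.sum_congr rfl fun x _ =>
    Finset.sum_congr rfl fun x1 _ => step x x1) ?_
  rw [Finset.sum_comm]
  refine Finset.sum_congr rfl fun b _ => ?_
  rw [Finset.sum_comm]

lemma aux_ptrA_kron_conj (v : Matrix A A ℂ) (hv1 : vᴴ * v = 1)
    (N : Matrix (A × B) (A × B) ℂ) :
    ptrA ((v ⊗ₖ (1 : Matrix B B ℂ)) * N * (vᴴ ⊗ₖ (1 : Matrix B B ℂ))) = ptrA N := by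
  have hdel : ∀ q1 p1 : A, ∑ a : A, star (v a q1) * v a p1
      = (1 : Matrix A A ℂ) q1 p1 := by
    intro q1 p1
    rw [← hv1, Matrix.mul_apply]
    simp [Matrix.conjTranspose_apply]
  ext b b'
  simp only [ptrA, Matrix.of_apply, Matrix.mul_apply, Matrix.kroneckerMap_apply,
    Matrix.conjTranspose_apply, Matrix.one_apply, Fintype.sum_prod_type]
  simp only [mul_ite, mul_zero, mul_one, ite_mul, zero_mul, one_mul,
    Finset.sum_ite_eq, Finset.sum_ite_eq', Finset.mem_univ, if_true,
    Finset.sum_mul, Finset.mul_sum]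
  have key : ∀ f : A → A → ℂ, (∑ a : A, ∑ q1 : A, ∑ p1 : A,
      v a p1 * f p1 q1 * star (v a q1)) = ∑ p1, f p1 p1 := by
    intro f
    rw [Finset.sum_comm]
    calc ∑ q1 : A, ∑ a : A, ∑ p1 : A, v a p1 * f p1 q1 * star (v a q1)
        = ∑ q1 : A, ∑ p1 : A, (∑ a : A, star (v a q1) * v a p1) * f p1 q1 := by
          refine Finset.sum_congr rfl fun q1 _ => ?_
          rw [Finset.sum_comm]
          refine Finset.sum_congr rfl fun p1 _ => ?_
          rw [Finset.sum_mul]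
          exact Finset.sum_congr rfl fun a _ => by ring
      _ = ∑ q1 : A, ∑ p1 : A, (1 : Matrix A A ℂ) q1 p1 * f p1 q1 := by
          refine Finset.sum_congr rfl fun q1 _ => Finset.sum_congr rfl fun p1 _ => ?_
          rw [hdel q1 p1]
      _ = ∑ p1 : A, f p1 p1 := by
          simp [Matrix.one_apply, ite_mul, Finset.sum_ite_eq, Finset.sum_ite_eq']
  exact key fun p1 q1 => N (p1, b) (q1, b')

/-- Contractivity of the partial trace with respect to the trace norm, for Hermitian
matrices. -/
lemma aux_traceNorm_ptrA_le {M : Matrix (A × B) (A × B) ℂ} (hM : M.IsHermitian) :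
    traceNorm (ptrA M) ≤ traceNorm M := by
  have hN : (ptrA M).IsHermitian := aux_ptrA_isHermitian hM
  set E : Matrix B B ℂ := (hN.eigenvectorUnitary : Matrix B B ℂ) with hE
  have hE1 : Eᴴ * E = 1 := aux_eigU_mul_self hN
  have hE2 : E * Eᴴ = 1 := aux_self_mul_eigU hN
  set s : B → ℂ := fun i => if hN.eigenvalues i < 0 then -1 else 1 with hs
  have hsstar : ∀ i, star (s i) = s i := by
    intro i
    by_cases h : hN.eigenvalues i < 0 <;> simp [hs, h]
  have hssq : ∀ i, s i * s i = 1 := by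
    intro i
    by_cases h : hN.eigenvalues i < 0 <;> simp [hs, h]
  set W : Matrix B B ℂ := E * Matrix.diagonal s * Eᴴ with hW
  have hWH : Wᴴ = W := by
    have hss : star s = s := funext hsstar
    rw [hW]
    simp only [Matrix.conjTranspose_mul, Matrix.conjTranspose_conjTranspose,
      Matrix.diagonal_conjTranspose, hss, Matrix.mul_assoc]
  have hW1 : Wᴴ * W = 1 := by
    rw [hWH, hW, aux_conj_mul_conj hE1, Matrix.diagonal_mul_diagonal]
    have : (fun i => s i * s i) = fun _ => (1 : ℂ) := funext hssq
    rw [this, Matrix.diagonal_one, mul_one, hE2]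
  have hspec : ptrA M = E * Matrix.diagonal (RCLike.ofReal ∘ hN.eigenvalues) * Eᴴ := by
    simpa [Matrix.star_eq_conjTranspose] using hN.spectral_theorem
  have htr : (ptrA M * W).trace = ((∑ i, |hN.eigenvalues i| : ℝ) : ℂ) := by
    have h1 : (ptrA M) * W = E * (Matrix.diagonal (RCLike.ofReal ∘ hN.eigenvalues)
        * Matrix.diagonal s) * Eᴴ := by
      conv_lhs => rw [hspec, hW]
      exact aux_conj_mul_conj hE1 _ _
    rw [h1, aux_trace_conj hE1, Matrix.diagonal_mul_diagonal, Matrix.trace_diagonal]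
    push_cast
    refine Finset.sum_congr rfl fun i _ => ?_
    simp only [Function.comp_apply, aux_ofReal, hs]
    split
    · rename_i h
      rw [abs_of_neg h]; push_cast; ring
    · rename_i h
      rw [abs_of_nonneg (le_of_not_gt h)]; simp
  have hW2 : W * Wᴴ = 1 := by
    rw [hWH] at hW1 ⊢
    exact hW1
  have hkr1 : ((1 : Matrix A A ℂ) ⊗ₖ W)ᴴ * ((1 : Matrix A A ℂ) ⊗ₖ W) = 1 := by
    rw [aux_kron_conjT, Matrix.conjTranspose_one, ← Matrix.mul_kronecker_mul, Matrix.one_mul,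
      hW1, Matrix.one_kronecker_one]
  have hkr2 : ((1 : Matrix A A ℂ) ⊗ₖ W) * ((1 : Matrix A A ℂ) ⊗ₖ W)ᴴ = 1 := by
    rw [aux_kron_conjT, Matrix.conjTranspose_one, ← Matrix.mul_kronecker_mul, Matrix.one_mul,
      hW2, Matrix.one_kronecker_one]
  calc traceNorm (ptrA M) = ∑ i, |hN.eigenvalues i| := traceNorm_eq_sum_abs hN
    _ = ((M * ((1 : Matrix A A ℂ) ⊗ₖ W)).trace).re := by
        rw [aux_trace_mul_one_kron, htr, Complex.ofReal_re]
    _ ≤ traceNorm M := aux_re_trace_mul_le hM hkr1 hkr2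

end Aux

/-- The semi-distance `d` is bounded by the trace distance to any gauge-transformed
state: if `U_enc† u U_enc = v ⊗ I_B`, then for Hermitian `ρ, σ`,
`d(ρ, σ) ≤ (1/2)·‖ρ - uσu†‖₁`. -/
theorem semidistance_le_gauge_trace_distance
    {A B nn : Type} [Fintype A] [Fintype B] [Fintype nn]
    [DecidableEq A] [DecidableEq B] [DecidableEq nn]
    (hcard : Fintype.card nn = Fintype.card A * Fintype.card B)
    (Uenc : Matrix nn (A × B) ℂ)
    (hUenc1 : Uencᴴ * Uenc = 1) (hUenc2 : Uenc * Uencᴴ = 1)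
    (u : Matrix nn nn ℂ) (hu1 : uᴴ * u = 1) (hu2 : u * uᴴ = 1)
    (v : Matrix A A ℂ) (hv1 : vᴴ * v = 1) (hv2 : v * vᴴ = 1)
    (huv : Uencᴴ * u * Uenc = v ⊗ₖ (1 : Matrix B B ℂ))
    (d : Matrix nn nn ℂ → Matrix nn nn ℂ → ℝ)
    (hd : ∀ ρ σ : Matrix nn nn ℂ, d ρ σ =
      (1 / 2) * traceNorm (ptrA (Uencᴴ * ρ * Uenc) - ptrA (Uencᴴ * σ * Uenc))) :
    ∀ ρ σ : Matrix nn nn ℂ, ρ.IsHermitian → σ.IsHermitian →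
      d ρ σ ≤ (1 / 2) * traceNorm (ρ - u * σ * uᴴ) := by
  intro ρ σ hρ hσ
  have hcancel : ∀ X : Matrix nn (A × B) ℂ, Uenc * (Uencᴴ * X) = X := fun X => by
    rw [← Matrix.mul_assoc, hUenc2, Matrix.one_mul]
  set T : Matrix nn nn ℂ := ρ - u * σ * uᴴ with hT
  have hTH : T.IsHermitian := by
    refine hρ.sub ?_
    have : (u * σ * uᴴ)ᴴ = u * σ * uᴴ := by
      simp only [Matrix.conjTranspose_mul, Matrix.conjTranspose_conjTranspose, hσ.eq,
        Matrix.mul_assoc]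
    exact this
  set M : Matrix (A × B) (A × B) ℂ := Uencᴴ * T * Uenc with hM
  have hMH : M.IsHermitian := Matrix.isHermitian_conjTranspose_mul_mul Uenc hTH
  have huvH : Uencᴴ * uᴴ * Uenc = vᴴ ⊗ₖ (1 : Matrix B B ℂ) := by
    calc Uencᴴ * uᴴ * Uenc = (Uencᴴ * u * Uenc)ᴴ := by
          simp only [Matrix.conjTranspose_mul, Matrix.conjTranspose_conjTranspose,
            Matrix.mul_assoc]
      _ = vᴴ ⊗ₖ (1 : Matrix B B ℂ) := by
          rw [huv, aux_kron_conjT, Matrix.conjTranspose_one]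
  have key : Uencᴴ * (u * σ * uᴴ) * Uenc =
      (v ⊗ₖ (1 : Matrix B B ℂ)) * (Uencᴴ * σ * Uenc) * (vᴴ ⊗ₖ (1 : Matrix B B ℂ)) := by
    rw [← huv, ← huvH]
    simp only [Matrix.mul_assoc, hcancel]
  have h1 : ptrA (Uencᴴ * ρ * Uenc) - ptrA (Uencᴴ * σ * Uenc) = ptrA M := by
    rw [hM, hT, Matrix.mul_sub, Matrix.sub_mul, aux_ptrA_sub, key,
      aux_ptrA_kron_conj v hv1]
  have h2 : traceNorm (ptrA M) ≤ traceNorm M := aux_traceNorm_ptrA_le hMH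
  have h3 : traceNorm M = traceNorm T := aux_traceNorm_conj Uenc hUenc1 hUenc2 T
  rw [hd, h1]
  rw [h3] at h2
  linarith
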